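/- On the ring graph with n≥5 nodes and 0<α<1, a profile a∉{x⃗,y⃗} is a strict Nash equilibrium of the game with adversary-influenced utilities Ũ_i(·,S̄(a)) (for a policy S̄ with |S̄(a)|=2) only if the x-players of a form a single contiguous arc [i,j] with 1 ≤ j−i ≤ n−3 and S̄(a) = {i−1, j+1}. -/

import Mathlib

open Finset

/-- Pairwise coordination payoff: `true` is action `x`, `false` is action `y`. -/
def coordPayoff (α : ℝ) : Bool → Bool → ℝ
  | true, true => 1 + α
  | false, false => 1
  | _, _ => 0

/-- Utility of agent `i`: sum of pairwise payoffs with its neighbors. -/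
def util {V : Type*} [Fintype V] [DecidableEq V] (G : SimpleGraph V) [DecidableRel G.Adj]
    (α : ℝ) (a : V → Bool) (i : V) : ℝ :=
  ∑ j ∈ G.neighborFinset i, coordPayoff α (a i) (a j)

/-- Adversary-influenced utility: bonus 1 for playing `y` (= `false`) while influenced. -/
def utilTilde {V : Type*} [Fintype V] [DecidableEq V] (G : SimpleGraph V) [DecidableRel G.Adj]
    (α : ℝ) (S : Finset V) (a : V → Bool) (i : V) : ℝ :=
  util G α a i + if i ∈ S ∧ a i = false then 1 else 0

/-- The ring (cycle) graph on `ZMod n`. -/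
def ringGraph (n : ℕ) : SimpleGraph (ZMod n) where
  Adj i j := i ≠ j ∧ (j = i + 1 ∨ i = j + 1)
  symm := by constructor; intro i j h; exact ⟨h.1.symm, h.2.symm⟩
  loopless := by constructor; intro i h; exact h.1 rfl

instance (n : ℕ) : DecidableRel (ringGraph n).Adj :=
  fun i j => inferInstanceAs (Decidable (i ≠ j ∧ (j = i + 1 ∨ i = j + 1)))

/-- The arc `[i, i+t] = {i, i+1, …, i+t}` (indices mod `n`). -/
def arc (n : ℕ) (i : ZMod n) (t : ℕ) : Finset (ZMod n) :=
  (Finset.range (t + 1)).image fun m : ℕ => i + (m : ZMod n)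

/-- On a ring with `n ≥ 5` and a capability-2 mobile intelligent policy, a strict Nash
profile other than `x⃗`, `y⃗` must have its `x`-players forming one arc `[i, i+t]` with
`1 ≤ t ≤ n−3`, and the adversary must influence the two endpoints `{i−1, i+t+1}`. -/
lemma zmod_cast_inj {n : ℕ} (p q : ℕ) (hp : p < n) (hq : q < n)
    (h : (p : ZMod n) = (q : ZMod n)) : p = q := by
  have : p % n = q % n := (ZMod.natCast_eq_natCast_iff' p q n).mp h
  rw [Nat.mod_eq_of_lt hp, Nat.mod_eq_of_lt hq] at this
  exact this

lemma zmod_one_ne_zero {n : ℕ} (hn : 5 ≤ n) : (1 : ZMod n) ≠ 0 := by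
  intro h
  have h2 : ((1:ℕ) : ZMod n) = ((0:ℕ) : ZMod n) := by exact_mod_cast h
  have := zmod_cast_inj 1 0 (by omega) (by omega) h2
  omega

lemma zmod_two_ne_zero {n : ℕ} (hn : 5 ≤ n) : (2 : ZMod n) ≠ 0 := by
  intro h
  have h2 : ((2:ℕ) : ZMod n) = ((0:ℕ) : ZMod n) := by exact_mod_cast h
  have := zmod_cast_inj 2 0 (by omega) (by omega) h2
  omega

lemma ring_nbr {n : ℕ} [NeZero n] (hn : 5 ≤ n) (i : ZMod n) :
    (ringGraph n).neighborFinset i = {i + 1, i - 1} := by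
  ext j
  rw [SimpleGraph.mem_neighborFinset]
  simp only [ringGraph, Finset.mem_insert, Finset.mem_singleton]
  constructor
  · rintro ⟨h1, h2 | h2⟩
    · exact Or.inl h2
    · right; rw [h2]; ring
  · rintro (h | h)
    · subst h
      refine ⟨?_, Or.inl rfl⟩
      intro h; exact zmod_one_ne_zero hn (by linear_combination -h)
    · subst h
      refine ⟨?_, Or.inr (by ring)⟩
      intro h; exact zmod_one_ne_zero hn (by linear_combination h)

lemma utilTilde_eval {n : ℕ} [NeZero n] (hn : 5 ≤ n) (α : ℝ) (S : Finset (ZMod n))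
    (a : ZMod n → Bool) (i : ZMod n) :
    utilTilde (ringGraph n) α S a i =
      coordPayoff α (a i) (a (i+1)) + coordPayoff α (a i) (a (i-1))
        + if i ∈ S ∧ a i = false then 1 else 0 := by
  have hne : i + 1 ≠ i - 1 := by
    intro h; exact zmod_two_ne_zero hn (by linear_combination h)
  rw [utilTilde, util, ring_nbr hn, Finset.sum_pair hne]

lemma local_rules {n : ℕ} [NeZero n] (hn : 5 ≤ n) {α : ℝ} (hα0 : 0 < α) (hα1 : α < 1)
    {S : Finset (ZMod n)} {a : ZMod n → Bool} (i : ZMod n)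
    (h : utilTilde (ringGraph n) α S a i
        > utilTilde (ringGraph n) α S (Function.update a i (!a i)) i) :
    (a (i+1) = true → a (i-1) = true → a i = true) ∧
    (a i = true → a (i+1) = true ∨ a (i-1) = true) ∧
    (a i = false → (a (i+1) = true ∨ a (i-1) = true) → i ∈ S) ∧
    (a i = true → (a (i+1) = true → a (i-1) = false) → i ∉ S) := by
  have h1 : i + 1 ≠ i := fun h => zmod_one_ne_zero hn (by linear_combination h)
  have h2 : i - 1 ≠ i := fun h => zmod_one_ne_zero hn (by linear_combination -h)
  rw [utilTilde_eval hn, utilTilde_eval hn, Function.update_of_ne h1,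
    Function.update_of_ne h2, Function.update_self] at h
  cases hb : a i <;> cases hp : a (i+1) <;> cases hm : a (i-1) <;>
    by_cases hiS : i ∈ S <;>
    simp only [hb, hp, hm, hiS, coordPayoff, Bool.not_true, Bool.not_false, and_true,
      and_false, if_true, if_false, true_and, false_and, if_pos, not_true, not_false_iff] at h <;>
    simp [hb, hp, hm, hiS] <;> norm_num at h <;> linarith

lemma cast_to_neg {n : ℕ} (p q : ℕ) (h : p + q = n) :
    ((p : ℕ) : ZMod n) = -((q : ℕ) : ZMod n) := by
  have h0 : ((p + q : ℕ) : ZMod n) = 0 := by rw [h]; exact ZMod.natCast_self n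
  push_cast at h0
  linear_combination h0

theorem ring_MI_k2_recurrent_characterization {n : ℕ} [NeZero n] (hn : 5 ≤ n) (α : ℝ)
    (hα0 : 0 < α) (hα1 : α < 1)
    (Sbar : (ZMod n → Bool) → Finset (ZMod n)) (a : ZMod n → Bool)
    (hcard : (Sbar a).card = 2)
    (hax : a ≠ fun _ => true) (hay : a ≠ fun _ => false)
    (hnash : ∀ (i : ZMod n) (b : Bool), b ≠ a i →
      utilTilde (ringGraph n) α (Sbar a) a i
        > utilTilde (ringGraph n) α (Sbar a) (Function.update a i b) i) :
    ∃ (i : ZMod n) (t : ℕ), 1 ≤ t ∧ t ≤ n - 3 ∧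
      (Finset.univ.filter fun v => a v = true) = arc n i t ∧
      Sbar a = {i - 1, i + (t : ZMod n) + 1} := by
  classical
  have rules := fun i : ZMod n =>
    local_rules hn hα0 hα1 i (hnash i (!a i) (by cases h : a i <;> simp [h]))
  have ruleA : ∀ i : ZMod n, a (i+1) = true → a (i-1) = true → a i = true :=
    fun i => (rules i).1
  have ruleB : ∀ i : ZMod n, a i = true → a (i+1) = true ∨ a (i-1) = true :=
    fun i => (rules i).2.1
  have ruleC : ∀ i : ZMod n, a i = false → (a (i+1) = true ∨ a (i-1) = true) → i ∈ Sbar a :=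
    fun i => (rules i).2.2.1
  obtain ⟨i0, hi0⟩ : ∃ v, a v = true := by
    by_contra h; push_neg at h
    exact hay (funext fun v => by simpa using h v)
  obtain ⟨j0, hj0⟩ : ∃ v, a v = false := by
    by_contra h; push_neg at h
    exact hax (funext fun v => by simpa using h v)
  have hPex : ∃ m : ℕ, a (i0 + (m : ZMod n)) = false := by
    refine ⟨(j0 - i0).val, ?_⟩
    rw [ZMod.natCast_rightInverse (j0 - i0), add_sub_cancel]
    exact hj0
  have hQex : ∃ m : ℕ, a (i0 - (m : ZMod n)) = false := by
    refine ⟨(i0 - j0).val, ?_⟩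
    rw [ZMod.natCast_rightInverse (i0 - j0), sub_sub_cancel]
    exact hj0
  set m1 := Nat.find hPex with hm1def
  set m2 := Nat.find hQex with hm2def
  have hf1 : a (i0 + (m1 : ZMod n)) = false := Nat.find_spec hPex
  have hg2 : a (i0 - (m2 : ZMod n)) = false := Nat.find_spec hQex
  have fmin : ∀ m, m < m1 → a (i0 + (m : ZMod n)) = true := by
    intro m hm
    have := Nat.find_min hPex hm
    simpa using this
  have gmin : ∀ m, m < m2 → a (i0 - (m : ZMod n)) = true := by
    intro m hm
    have := Nat.find_min hQex hm
    simpa using this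
  have hm1pos : 0 < m1 := by
    rcases Nat.eq_zero_or_pos m1 with h | h
    · exfalso; rw [h] at hf1; simp [hi0] at hf1
    · exact h
  have hm2pos : 0 < m2 := by
    rcases Nat.eq_zero_or_pos m2 with h | h
    · exfalso; rw [h] at hg2; simp [hi0] at hg2
    · exact h
  have hm1lt : m1 < n :=
    lt_of_le_of_lt (Nat.find_le (by
      rw [ZMod.natCast_rightInverse (j0 - i0), add_sub_cancel]; exact hj0)) (ZMod.val_lt _)
  have hm2lt : m2 < n :=
    lt_of_le_of_lt (Nat.find_le (by
      rw [ZMod.natCast_rightInverse (i0 - j0), sub_sub_cancel]; exact hj0)) (ZMod.val_lt _)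
  -- cast helpers
  have hcast1 : ((m1 - 1 : ℕ) : ZMod n) = (m1 : ZMod n) - 1 := by
    rw [Nat.cast_sub hm1pos]; simp
  have hcast2 : ((m2 - 1 : ℕ) : ZMod n) = (m2 : ZMod n) - 1 := by
    rw [Nat.cast_sub hm2pos]; simp
  have hsum_le : m1 + m2 ≤ n := by
    by_contra h
    push_neg at h
    have h1 : n - m2 < m1 := by omega
    have := fmin (n - m2) h1
    rw [cast_to_neg (n - m2) m2 (by omega)] at this
    rw [← sub_eq_add_neg] at this
    rw [this] at hg2; exact absurd hg2 (by simp)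
  have hsum_ne : m1 + m2 ≠ n := by
    intro heq
    have hb : i0 + (m1 : ZMod n) = i0 - (m2 : ZMod n) := by
      rw [cast_to_neg m1 m2 heq]; ring
    set b := i0 + (m1 : ZMod n) with hbdef
    have h1 : a (b + 1) = true := by
      have he : b + 1 = i0 - ((m2 - 1 : ℕ) : ZMod n) := by
        rw [hb, hcast2]; ring
      rw [he]; exact gmin (m2 - 1) (by omega)
    have h2 : a (b - 1) = true := by
      have he : b - 1 = i0 + ((m1 - 1 : ℕ) : ZMod n) := by
        rw [hbdef, hcast1]; ring
      rw [he]; exact fmin (m1 - 1) (by omega)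
    have hab := ruleA b h1 h2
    rw [hab] at hf1; exact absurd hf1 (by simp)
  have hsum3 : 3 ≤ m1 + m2 := by
    by_contra h
    push_neg at h
    have hm1 : m1 = 1 := by omega
    have hm2 : m2 = 1 := by omega
    rcases ruleB i0 hi0 with h1 | h1
    · have : i0 + 1 = i0 + ((m1 : ℕ) : ZMod n) := by rw [hm1]; simp
      rw [this, hf1] at h1; exact absurd h1 (by simp)
    · have : i0 - 1 = i0 - ((m2 : ℕ) : ZMod n) := by rw [hm2]; simp
      rw [this, hg2] at h1; exact absurd h1 (by simp)
  set b1 := i0 - (m2 : ZMod n) with hb1def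
  set b2 := i0 + (m1 : ZMod n) with hb2def
  have hb1S : b1 ∈ Sbar a := by
    apply ruleC b1 hg2
    left
    have : b1 + 1 = i0 - ((m2 - 1 : ℕ) : ZMod n) := by rw [hb1def, hcast2]; ring
    rw [this]; exact gmin (m2 - 1) (by omega)
  have hb2S : b2 ∈ Sbar a := by
    apply ruleC b2 hf1
    right
    have : b2 - 1 = i0 + ((m1 - 1 : ℕ) : ZMod n) := by rw [hb2def, hcast1]; ring
    rw [this]; exact fmin (m1 - 1) (by omega)
  have hb12 : b1 ≠ b2 := by
    intro heq
    rw [hb1def, hb2def] at heq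
    have h1 : ((n - m2 : ℕ) : ZMod n) = ((m1 : ℕ) : ZMod n) := by
      rw [cast_to_neg (n - m2) m2 (by omega)]
      linear_combination heq
    have := zmod_cast_inj (n - m2) m1 (by omega) hm1lt h1
    omega
  have hSeq : Sbar a = {b1, b2} := by
    symm
    apply Finset.eq_of_subset_of_card_le
    · intro v hv
      simp only [Finset.mem_insert, Finset.mem_singleton] at hv
      rcases hv with rfl | rfl
      · exact hb1S
      · exact hb2S
    · rw [hcard, Finset.card_pair hb12]
  -- propagation of false through the gap
  have prop : ∀ d : ℕ, m1 + d ≤ n - m2 → a (i0 + ((m1 + d : ℕ) : ZMod n)) = false := by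
    intro d
    induction d with
    | zero => intro _; simpa using hf1
    | succ d ih =>
      intro hle
      have hprev := ih (by omega)
      by_contra hT
      have hT' : a (i0 + ((m1 + (d+1) : ℕ) : ZMod n)) = true := by
        cases h : a (i0 + ((m1 + (d+1) : ℕ) : ZMod n))
        · exact absurd h hT
        · rfl
      set v := i0 + ((m1 + d : ℕ) : ZMod n) with hvdef
      have hv1 : v + 1 = i0 + ((m1 + (d+1) : ℕ) : ZMod n) := by
        rw [hvdef]; push_cast; ring
      have hvS : v ∈ Sbar a := ruleC v hprev (Or.inl (by rw [hv1]; exact hT'))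
      rw [hSeq] at hvS
      simp only [Finset.mem_insert, Finset.mem_singleton] at hvS
      rcases hvS with hv | hv
      · -- v = b1 = i0 + (n - m2)
        rw [hvdef, hb1def] at hv
        have h1 : ((m1 + d : ℕ) : ZMod n) = ((n - m2 : ℕ) : ZMod n) := by
          rw [cast_to_neg (n - m2) m2 (by omega)]
          linear_combination hv
        have := zmod_cast_inj (m1 + d) (n - m2) (by omega) (by omega) h1
        omega
      · -- v = b2 = i0 + m1, so d = 0
        rw [hvdef, hb2def] at hv
        have h1 : ((m1 + d : ℕ) : ZMod n) = ((m1 : ℕ) : ZMod n) := by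
          linear_combination hv
        have hd0 := zmod_cast_inj (m1 + d) m1 (by omega) hm1lt h1
        have hd : d = 0 := by omega
        subst hd
        have h2 : a (v - 1) = true := by
          have : v - 1 = i0 + ((m1 - 1 : ℕ) : ZMod n) := by
            rw [hvdef, hcast1]; push_cast; ring
          rw [this]; exact fmin (m1 - 1) (by omega)
        have h3 : a (v + 1) = true := by rw [hv1]; exact hT'
        have := ruleA v h3 h2
        rw [this] at hprev; exact absurd hprev (by simp)
  -- the answer
  refine ⟨i0 - ((m2 - 1 : ℕ) : ZMod n), m1 + m2 - 2, by omega, by omega, ?_, ?_⟩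
  · -- filter = arc
    ext v
    simp only [Finset.mem_filter, Finset.mem_univ, true_and, arc, Finset.mem_image,
      Finset.mem_range]
    constructor
    · intro hv
      obtain ⟨m, hmlt, hveq⟩ : ∃ m : ℕ, m < n ∧ v = i0 + ((m : ℕ) : ZMod n) :=
        ⟨(v - i0).val, ZMod.val_lt _, by rw [ZMod.natCast_rightInverse (v - i0)]; ring⟩
      by_cases hc1 : m < m1
      · refine ⟨m2 - 1 + m, by omega, ?_⟩
        rw [hveq]; push_cast [Nat.cast_sub hm2pos]; ring
      · by_cases hc2 : m ≤ n - m2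
        · exfalso
          have := prop (m - m1) (by omega)
          have hmm : m1 + (m - m1) = m := by omega
          rw [hmm, ← hveq] at this
          rw [hv] at this; exact absurd this (by simp)
        · -- m > n - m2
          refine ⟨m - (n - m2 + 1), by omega, ?_⟩
          have hm_eq : m = (n - m2 + 1) + (m - (n - m2 + 1)) := by omega
          rw [hveq]
          have hc : ((m : ℕ) : ZMod n) =
              ((n - m2 : ℕ) : ZMod n) + 1 + ((m - (n - m2 + 1) : ℕ) : ZMod n) := by
            conv_lhs => rw [hm_eq]
            push_cast; ring
          rw [hc, cast_to_neg (n - m2) m2 (by omega), Nat.cast_sub hm2pos]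
          push_cast; ring
    · rintro ⟨k, hk, rfl⟩
      by_cases hc : k ≤ m2 - 1
      · have : i0 - ((m2 - 1 : ℕ) : ZMod n) + ((k : ℕ) : ZMod n)
            = i0 - ((m2 - 1 - k : ℕ) : ZMod n) := by
          rw [Nat.cast_sub hm2pos, Nat.cast_sub (by omega : k ≤ m2 - 1)]
          push_cast [Nat.cast_sub hm2pos]; ring
        rw [this]; exact gmin (m2 - 1 - k) (by omega)
      · have : i0 - ((m2 - 1 : ℕ) : ZMod n) + ((k : ℕ) : ZMod n)
            = i0 + ((k - (m2 - 1) : ℕ) : ZMod n) := by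
          rw [Nat.cast_sub hm2pos, Nat.cast_sub (by omega : m2 - 1 ≤ k)]
          push_cast [Nat.cast_sub hm2pos]; ring
        rw [this]; exact fmin (k - (m2 - 1)) (by omega)
  · -- S = endpoints
    rw [hSeq]
    congr 1
    · rw [hb1def, hcast2]; ring
    · congr 1
      rw [hb2def]
      rw [hcast2, Nat.cast_sub (by omega : 2 ≤ m1 + m2)]
      push_cast; ring
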